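/- Let u solve harmonic map flow on B_R × [0,T) with stress-energy tensor uniformly bounded in L^q: sup_{τ≤t<T} ‖S(u(t))‖_{L^q} ≤ σ for some q ≥ 1. Then for τ ≤ t₁ ≤ t₂ < T, E(u(t₂), B_{R/2}) ≤ E(u(t₁), B_R) + C σ (t₂ − t₁) R^{-2/q}. -/

import Mathlib

open MeasureTheory Metric Filter
open scoped ENNReal NNReal

/-- Lemma 4.1: local energy growth under an `L^q` stress-energy bound.
Here `e t` is the energy density `½|du(t)|²` of a solution of harmonic map flow on
`B_R × [0,T)` (in a chart, `B_R ⊆ ℝ²`) and `Snorm t = |S(u(t))|` the pointwise norm of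
its stress-energy tensor; the weak form of the pointwise energy identity
`∂_t e + |𝒯(u)|² = div div S` is assumed: for every `C²` cutoff `φ ≥ 0` supported in
`B_R`, `∫ e(t₂) φ − ∫ e(t₁) φ ≤ ∫_{t₁}^{t₂} ∫ |∇²φ| |S(t)|`.  If
`sup_{τ≤t<T} ‖S(u(t))‖_{L^q(B_R)} ≤ σ` with `q ≥ 1`, then for `τ ≤ t₁ ≤ t₂ < T`,
`E(u(t₂), B_{R/2}) ≤ E(u(t₁), B_R) + C σ (t₂ − t₁) R^{−2/q}`. -/

noncomputable def relu3 (t : ℝ) : ℝ := (max t 0) ^ 3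

lemma relu3_nonneg (t : ℝ) : 0 ≤ relu3 t := pow_nonneg (le_max_right _ _) 3

lemma relu3_of_nonpos {t : ℝ} (h : t ≤ 0) : relu3 t = 0 := by
  simp [relu3, max_eq_right h]

lemma relu3_of_pos {t : ℝ} (h : 0 < t) : relu3 t = t ^ 3 := by
  simp [relu3, max_eq_left h.le]

lemma abs_relu3_le (t : ℝ) : |relu3 t| ≤ |t| ^ 3 := by
  rw [abs_of_nonneg (relu3_nonneg t)]
  exact pow_le_pow_left₀ (le_max_right _ _) (max_le (le_abs_self t) (abs_nonneg t)) 3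

lemma relu3_hasDerivAt (t : ℝ) : HasDerivAt relu3 (3 * (max t 0) ^ 2) t := by
  rcases lt_trichotomy t 0 with ht | rfl | ht
  · have : (3 : ℝ) * (max t 0) ^ 2 = 0 := by simp [max_eq_right ht.le]
    rw [this]
    apply (hasDerivAt_const t (0 : ℝ)).congr_of_eventuallyEq
    filter_upwards [Iio_mem_nhds ht] with s hs
    exact relu3_of_nonpos (le_of_lt hs)
  · have : (3 : ℝ) * (max (0:ℝ) 0) ^ 2 = 0 := by simp
    rw [this, hasDerivAt_iff_isLittleO]
    rw [Asymptotics.isLittleO_iff]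
    intro c hc
    filter_upwards [Metric.ball_mem_nhds (0:ℝ) (Real.sqrt_pos.2 hc)] with s hs
    simp only [Metric.mem_ball, Real.dist_eq, sub_zero] at hs
    simp only [relu3_of_nonpos le_rfl, sub_zero, mul_zero, smul_eq_mul]
    calc ‖relu3 s‖ ≤ |s| ^ 3 := abs_relu3_le s
    _ = |s| ^ 2 * |s| := by ring
    _ ≤ c * |s| := by
        apply mul_le_mul_of_nonneg_right _ (abs_nonneg s)
        calc |s| ^ 2 ≤ Real.sqrt c ^ 2 := by
              exact pow_le_pow_left₀ (abs_nonneg s) hs.le 2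
        _ = c := Real.sq_sqrt hc.le
    _ = c * ‖s‖ := rfl
  · have h2 : (3 : ℝ) * (max t 0) ^ 2 = 3 * t ^ 2 := by rw [max_eq_left ht.le]
    rw [h2]
    have := hasDerivAt_pow 3 t
    simp only [Nat.cast_ofNat, pow_succ] at this
    apply (hasDerivAt_pow 3 t).congr_of_eventuallyEq ?_ |>.congr_deriv ?_
    · filter_upwards [Ioi_mem_nhds ht] with s hs
      exact relu3_of_pos hs
    · norm_num

lemma relu3_deriv2 (t : ℝ) : HasDerivAt (fun s => 3 * (max s 0) ^ 2) (6 * max t 0) t := by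
  rcases lt_trichotomy t 0 with ht | rfl | ht
  · have : (6 : ℝ) * (max t 0) = 0 := by simp [max_eq_right ht.le]
    rw [this]
    apply (hasDerivAt_const t (0 : ℝ)).congr_of_eventuallyEq
    filter_upwards [Iio_mem_nhds ht] with s hs
    simp [max_eq_right (Set.mem_Iio.1 hs).le]
  · have : (6 : ℝ) * (max (0:ℝ) 0) = 0 := by simp
    rw [this, hasDerivAt_iff_isLittleO, Asymptotics.isLittleO_iff]
    intro c hc
    filter_upwards [Metric.ball_mem_nhds (0:ℝ) (by positivity : 0 < c/3)] with s hs
    simp only [Metric.mem_ball, Real.dist_eq, sub_zero] at hs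
    have hz : (3:ℝ) * (max (0:ℝ) 0) ^ 2 = 0 := by simp
    simp only [hz, max_self, sub_zero, mul_zero, smul_eq_mul]
    norm_num
    have h1 : max s 0 ≤ |s| := max_le (le_abs_self s) (abs_nonneg s)
    have h2 : (0:ℝ) ≤ max s 0 := le_max_right _ _
    calc 3 * max s 0 ^ 2 ≤ 3 * (|s| * |s|) := by
          rw [sq]; nlinarith
    _ ≤ 3 * ((c/3) * |s|) := by nlinarith [abs_nonneg s]
    _ = c * |s| := by ring
  · have h2 : (6 : ℝ) * (max t 0) = 6 * t := by rw [max_eq_left ht.le]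
    rw [h2]
    have base : HasDerivAt (fun s : ℝ => 3 * s ^ 2) (6 * t) t := by
      simpa using ((hasDerivAt_pow 2 t).const_mul 3).congr_deriv (by norm_num; ring)
    apply base.congr_of_eventuallyEq
    filter_upwards [Ioi_mem_nhds ht] with s hs
    rw [max_eq_left hs.le]

lemma contDiff_relu3 : ContDiff ℝ 2 relu3 := by
  have hd1 : deriv relu3 = fun t => 3 * (max t 0) ^ 2 :=
    funext fun t => (relu3_hasDerivAt t).deriv
  have : ((2 : ℕ) : WithTop ℕ∞) = (1 : ℕ) + 1 := by norm_num
  rw [show ((2 : WithTop ℕ∞)) = (1 : WithTop ℕ∞) + 1 by norm_num, contDiff_succ_iff_deriv]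
  refine ⟨fun t => (relu3_hasDerivAt t).differentiableAt, by simp, ?_⟩
  rw [hd1, contDiff_one_iff_deriv]
  constructor
  · exact fun t => (relu3_deriv2 t).differentiableAt
  · have hd2 : (deriv fun (t:ℝ) => 3 * (max t 0) ^ 2) = fun (t:ℝ) => 6 * max t 0 :=
      funext fun (t:ℝ) => (relu3_deriv2 t).deriv
    rw [hd2]
    exact continuous_const.mul (continuous_id.max continuous_const)

noncomputable def wfun (t : ℝ) : ℝ := relu3 t / (relu3 t + relu3 (1 - t))

lemma wden_pos (t : ℝ) : 0 < relu3 t + relu3 (1 - t) := by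
  rcases le_or_gt t (1/2) with h | h
  · have h1 : (0:ℝ) < 1 - t := by linarith
    have := relu3_of_pos h1
    nlinarith [relu3_nonneg t, relu3_nonneg (1 - t), pow_pos h1 3]
  · have h1 : (0:ℝ) < t := by linarith
    have := relu3_of_pos h1
    nlinarith [relu3_nonneg t, relu3_nonneg (1 - t), pow_pos h1 3]

lemma contDiff_wfun : ContDiff ℝ 2 wfun := by
  apply ContDiff.div contDiff_relu3
  · exact contDiff_relu3.add (contDiff_relu3.comp (contDiff_const.sub contDiff_id))
  · exact fun t => (wden_pos t).ne'

lemma wfun_nonneg (t : ℝ) : 0 ≤ wfun t :=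
  div_nonneg (relu3_nonneg t) (wden_pos t).le

lemma wfun_le_one (t : ℝ) : wfun t ≤ 1 := by
  rw [wfun, div_le_one (wden_pos t)]
  nlinarith [relu3_nonneg (1 - t)]

lemma wfun_of_nonpos {t : ℝ} (h : t ≤ 0) : wfun t = 0 := by
  simp [wfun, relu3_of_nonpos h]

lemma wfun_of_one_le {t : ℝ} (h : 1 ≤ t) : wfun t = 1 := by
  have h0 : relu3 (1 - t) = 0 := relu3_of_nonpos (by linarith)
  have h1 : relu3 t ≠ 0 := by
    rw [relu3_of_pos (by linarith : (0:ℝ) < t)]; positivity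
  simp [wfun, h0, div_self h1]

section Cutoff

variable {E : Type*} [NormedAddCommGroup E] [InnerProductSpace ℝ E]

/-- model cutoff: 1 on ball 1/2, supported in ball 1 -/
noncomputable def cutoff1 (y : E) : ℝ := wfun ((4/3) * (1 - ‖y‖ ^ 2))

lemma contDiff_cutoff1 : ContDiff ℝ 2 (cutoff1 (E := E)) :=
  contDiff_wfun.comp (ContDiff.mul contDiff_const (contDiff_const.sub (contDiff_norm_sq ℝ)))

lemma cutoff1_nonneg (y : E) : 0 ≤ cutoff1 y := wfun_nonneg _

lemma cutoff1_le_one (y : E) : cutoff1 y ≤ 1 := wfun_le_one _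

lemma cutoff1_eq_one {y : E} (h : ‖y‖ ≤ 1/2) : cutoff1 y = 1 := by
  apply wfun_of_one_le
  have : ‖y‖^2 ≤ 1/4 := by nlinarith [norm_nonneg y]
  nlinarith

lemma cutoff1_support {y : E} (h : 1 ≤ ‖y‖) : cutoff1 y = 0 := by
  apply wfun_of_nonpos
  nlinarith

end Cutoff

section Scaled

variable {E : Type*} [NormedAddCommGroup E] [InnerProductSpace ℝ E] [FiniteDimensional ℝ E]

lemma exists_hessBound :
    ∃ M : ℝ, 0 ≤ M ∧ ∀ y ∈ closedBall (0:E) 1,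
      ‖fderiv ℝ (fderiv ℝ (cutoff1 (E := E))) y‖ ≤ M := by
  have hcont : Continuous (fun y : E => ‖fderiv ℝ (fderiv ℝ (cutoff1 (E := E))) y‖) := by
    have h1 : ContDiff ℝ 1 (fderiv ℝ (cutoff1 (E := E))) :=
      contDiff_cutoff1.fderiv_right (m := 1) (by norm_num)
    exact ((h1.fderiv_right (m := 0) (by norm_num)).continuous).norm
  obtain ⟨y₀, _, hy₀⟩ := (isCompact_closedBall (0:E) 1).exists_isMaxOn
    ⟨0, by simp⟩ hcont.continuousOn
  exact ⟨_, ContinuousLinearMap.opNorm_nonneg _, fun y hy => hy₀ hy⟩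

variable (E) in
noncomputable def Tmap (R : ℝ) : E →L[ℝ] E := (R⁻¹ : ℝ) • ContinuousLinearMap.id ℝ E

variable (E) in
noncomputable def Pmap (R : ℝ) : (E →L[ℝ] ℝ) →L[ℝ] (E →L[ℝ] ℝ) :=
  (ContinuousLinearMap.compL ℝ E E ℝ).flip (Tmap E R)

lemma Tmap_apply (R : ℝ) (x : E) : Tmap E R x = R⁻¹ • x := by
  simp [Tmap]

lemma Tmap_norm_le (R : ℝ) : ‖Tmap E R‖ ≤ |R⁻¹| := by
  apply ContinuousLinearMap.opNorm_le_bound _ (abs_nonneg _)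
  intro v
  rw [Tmap_apply, norm_smul, Real.norm_eq_abs]

lemma Pmap_apply (R : ℝ) (f : E →L[ℝ] ℝ) : Pmap E R f = f.comp (Tmap E R) := rfl

lemma Pmap_norm_le (R : ℝ) : ‖Pmap E R‖ ≤ ‖Tmap E R‖ := by
  apply ContinuousLinearMap.opNorm_le_bound _ (norm_nonneg _)
  intro f
  rw [Pmap_apply, mul_comm]
  exact ContinuousLinearMap.opNorm_comp_le f (Tmap E R)

lemma fderiv_scaled_cutoff (R : ℝ) :
    fderiv ℝ (fun x : E => cutoff1 (Tmap E R x)) =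
      fun x => Pmap E R (fderiv ℝ (cutoff1 (E := E)) (Tmap E R x)) := by
  funext x
  have h1 : DifferentiableAt ℝ (cutoff1 (E := E)) (Tmap E R x) :=
    (contDiff_cutoff1.differentiable (by norm_num)).differentiableAt
  have := fderiv_comp (𝕜 := ℝ) x h1 (Tmap E R).differentiableAt
  rw [show (fun x : E => cutoff1 (Tmap E R x)) = (cutoff1 (E := E)) ∘ (Tmap E R) from rfl, this,
    (Tmap E R).fderiv, Pmap_apply]

lemma hess_scaled_cutoff {R : ℝ} (hR : 0 < R) {x : E} (hx : ‖x‖ ≤ R) {M : ℝ}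
    (hM : ∀ y ∈ closedBall (0:E) 1, ‖fderiv ℝ (fderiv ℝ (cutoff1 (E := E))) y‖ ≤ M) :
    ‖fderiv ℝ (fderiv ℝ (fun x : E => cutoff1 (Tmap E R x))) x‖ ≤ M / R ^ 2 := by
  have hTx : Tmap E R x ∈ closedBall (0:E) 1 := by
    rw [Tmap_apply, mem_closedBall, dist_zero_right, norm_smul]
    rw [norm_inv, Real.norm_eq_abs, abs_of_pos hR]
    rw [inv_mul_le_iff₀ hR]
    linarith
  have hd2 : DifferentiableAt ℝ (fderiv ℝ (cutoff1 (E := E))) (Tmap E R x) :=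
    (((contDiff_cutoff1 (E := E)).fderiv_right (m := 1) (by norm_num)).differentiable
      (by norm_num)).differentiableAt
  set H := fderiv ℝ (fderiv ℝ (cutoff1 (E := E))) (Tmap E R x) with hH
  have hchain : HasFDerivAt (fun x : E => Pmap E R (fderiv ℝ (cutoff1 (E := E)) (Tmap E R x)))
      ((Pmap E R).comp (H.comp (Tmap E R))) x := by
    exact (Pmap E R).hasFDerivAt.comp x ((hd2.hasFDerivAt).comp x (Tmap E R).hasFDerivAt)
  rw [fderiv_scaled_cutoff, hchain.fderiv]
  calc ‖(Pmap E R).comp (H.comp (Tmap E R))‖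
      ≤ ‖Pmap E R‖ * ‖H.comp (Tmap E R)‖ := ContinuousLinearMap.opNorm_comp_le _ _
  _ ≤ ‖Tmap E R‖ * (‖H‖ * ‖Tmap E R‖) := by
      apply mul_le_mul (Pmap_norm_le R) (ContinuousLinearMap.opNorm_comp_le _ _)
        (norm_nonneg _) (norm_nonneg _)
  _ ≤ R⁻¹ * (M * R⁻¹) := by
      have hT : ‖Tmap E R‖ ≤ R⁻¹ := by
        have := Tmap_norm_le (E := E) R
        rwa [abs_of_pos (inv_pos.2 hR)] at this
      have hHM : ‖H‖ ≤ M := hM _ hTx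
      have h0T : (0:ℝ) ≤ ‖Tmap E R‖ := norm_nonneg _
      have h0H : (0:ℝ) ≤ ‖H‖ := ContinuousLinearMap.opNorm_nonneg _
      have hM0 : (0:ℝ) ≤ M := le_trans h0H hHM
      have hR0 : (0:ℝ) ≤ R⁻¹ := (inv_pos.2 hR).le
      exact mul_le_mul hT (mul_le_mul hHM hT h0T hM0) (mul_nonneg h0H h0T) hR0
  _ = M / R ^ 2 := by
      have hRne : R ≠ 0 := hR.ne'
      field_simp

end Scaled

section Holder

variable {α : Type*} [MeasurableSpace α]

lemma holder_aux (μ : Measure α) {q : ℝ} (hq : 1 ≤ q) (S : α → ℝ) (hS : ∀ x, 0 ≤ S x)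
    {σ : ℝ} (hLp : eLpNorm S (ENNReal.ofReal q) μ ≤ ENNReal.ofReal σ) :
    ∫⁻ x, ENNReal.ofReal (S x) ∂μ ≤ ENNReal.ofReal σ * (μ Set.univ) ^ (1 - 1/q) := by
  have hq0 : (0:ℝ) < q := lt_of_lt_of_le one_pos hq
  have hofS : ∀ x, ‖S x‖ₑ = ENNReal.ofReal (S x) := fun x => Real.enorm_eq_ofReal (hS x)
  rcases eq_or_lt_of_le hq with rfl | hq1
  · -- q = 1
    have h1 : ∫⁻ x, ENNReal.ofReal (S x) ∂μ = eLpNorm S 1 μ := by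
      rw [eLpNorm_one_eq_lintegral_enorm]
      exact lintegral_congr fun x => (hofS x).symm
    have : (1:ℝ) - 1/1 = 0 := by norm_num
    rw [this, ENNReal.rpow_zero, mul_one, h1]
    simpa using hLp
  · -- q > 1
    obtain ⟨g, hgm, hgle, hgeq⟩ :=
      exists_measurable_le_lintegral_eq μ (fun x => ENNReal.ofReal (S x))
    rw [hgeq]
    have hconj : q.HolderConjugate (q / (q - 1)) := Real.HolderConjugate.conjExponent hq1
    have hH := ENNReal.lintegral_mul_le_Lp_mul_Lq μ hconj hgm.aemeasurable
      (aemeasurable_const (b := (1:ℝ≥0∞)))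
    replace hH : ∫⁻ a, g a ∂μ ≤
        (∫⁻ a, g a ^ q ∂μ) ^ (1/q) * (∫⁻ _a, (1:ℝ≥0∞) ^ (q/(q-1)) ∂μ) ^ (1/(q/(q-1))) := by
      simpa using hH
    refine le_trans hH ?_
    have hone : (∫⁻ _a, (1:ℝ≥0∞) ^ (q/(q-1)) ∂μ) ^ (1/(q/(q-1)))
        = (μ Set.univ) ^ (1 - 1/q) := by
      simp only [ENNReal.one_rpow, lintegral_one]
      congr 1
      rw [one_div, inv_div]
      field_simp
    rw [hone]
    apply mul_le_mul_left
    -- (∫⁻ g ^ q) ^ (1/q) ≤ ofReal σ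
    have hgq : ∫⁻ a, g a ^ q ∂μ ≤ ∫⁻ x, ENNReal.ofReal (S x) ^ q ∂μ :=
      lintegral_mono fun x => ENNReal.rpow_le_rpow (hgle x) hq0.le
    have hLq : (∫⁻ x, ENNReal.ofReal (S x) ^ q ∂μ) ^ (1/q) ≤ ENNReal.ofReal σ := by
      rw [eLpNorm_eq_lintegral_rpow_enorm_toReal (by simp [hq0] : ENNReal.ofReal q ≠ 0)
        ENNReal.ofReal_ne_top] at hLp
      rw [ENNReal.toReal_ofReal hq0.le] at hLp
      refine le_trans (le_of_eq ?_) hLp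
      congr 1
      exact lintegral_congr fun x => by rw [hofS x]
    refine le_trans ?_ hLq
    exact ENNReal.rpow_le_rpow hgq (by positivity)

end Holder

theorem stmt9 :
    ∃ C > (0 : ℝ), ∀ (q σ R τ T : ℝ), 1 ≤ q → 0 ≤ σ → 0 < R → 0 ≤ τ → τ < T →
      ∀ e Snorm : ℝ → EuclideanSpace ℝ (Fin 2) → ℝ,
        (∀ t x, 0 ≤ e t x) → (∀ t x, 0 ≤ Snorm t x) →
        (∀ t ∈ Set.Ico τ T, Integrable (e t)
          (volume.restrict (ball (0 : EuclideanSpace ℝ (Fin 2)) R))) →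
        (∀ t ∈ Set.Ico τ T,
          eLpNorm (Snorm t) (ENNReal.ofReal q)
              (volume.restrict (ball (0 : EuclideanSpace ℝ (Fin 2)) R)) ≤
            ENNReal.ofReal σ) →
        (∀ φ : EuclideanSpace ℝ (Fin 2) → ℝ, ContDiff ℝ 2 φ → (∀ x, 0 ≤ φ x) →
          Function.support φ ⊆ ball (0 : EuclideanSpace ℝ (Fin 2)) R →
          ∀ t₁ t₂, τ ≤ t₁ → t₁ ≤ t₂ → t₂ < T →
            (∫ x in ball (0 : EuclideanSpace ℝ (Fin 2)) R, e t₂ x * φ x) -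
                (∫ x in ball (0 : EuclideanSpace ℝ (Fin 2)) R, e t₁ x * φ x) ≤
              ∫ t in t₁..t₂, ∫ x in ball (0 : EuclideanSpace ℝ (Fin 2)) R,
                ‖fderiv ℝ (fderiv ℝ φ) x‖ * Snorm t x) →
        ∀ t₁ t₂, τ ≤ t₁ → t₁ ≤ t₂ → t₂ < T →
          (∫ x in ball (0 : EuclideanSpace ℝ (Fin 2)) (R / 2), e t₂ x) ≤
            (∫ x in ball (0 : EuclideanSpace ℝ (Fin 2)) R, e t₁ x) +
              C * σ * (t₂ - t₁) * R ^ (-(2 / q)) := by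
  classical
  obtain ⟨M, hM0, hM⟩ := exists_hessBound (E := EuclideanSpace ℝ (Fin 2))
  set ν : ℝ≥0∞ := volume (ball (0 : EuclideanSpace ℝ (Fin 2)) 1) with hν
  have hνtop : ν ≠ ∞ := measure_ball_lt_top.ne
  have hνt0 : 0 ≤ ν.toReal := ENNReal.toReal_nonneg
  refine ⟨(M + 1) * (ν.toReal + 1), by positivity, ?_⟩
  intro q σ R τ T hq hσ hR hτ hτT e Snorm he0 hS0 heInt hSLp hweak t₁ t₂ ht₁ ht₁₂ ht₂
  have hq0 : (0:ℝ) < q := lt_of_lt_of_le one_pos hq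
  set φ : EuclideanSpace ℝ (Fin 2) → ℝ :=
    fun x => cutoff1 (Tmap (EuclideanSpace ℝ (Fin 2)) R x) with hφdef
  have hTnorm : ∀ x : EuclideanSpace ℝ (Fin 2),
      ‖Tmap (EuclideanSpace ℝ (Fin 2)) R x‖ = R⁻¹ * ‖x‖ := by
    intro x
    rw [Tmap_apply, norm_smul, Real.norm_eq_abs, abs_of_pos (inv_pos.2 hR)]
  have hφc : ContDiff ℝ 2 φ :=
    contDiff_cutoff1.comp (Tmap (EuclideanSpace ℝ (Fin 2)) R).contDiff
  have hφ0 : ∀ x, 0 ≤ φ x := fun x => cutoff1_nonneg _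
  have hφ1 : ∀ x, φ x ≤ 1 := fun x => cutoff1_le_one _
  have hφsupp : Function.support φ ⊆ ball (0 : EuclideanSpace ℝ (Fin 2)) R := by
    intro x hx
    rw [mem_ball_zero_iff]
    by_contra hcon
    push_neg at hcon
    apply hx
    apply cutoff1_support
    rw [hTnorm]
    calc (1:ℝ) = R⁻¹ * R := by field_simp
    _ ≤ R⁻¹ * ‖x‖ := by
        exact mul_le_mul_of_nonneg_left hcon (inv_pos.2 hR).le
  have hφone : ∀ x ∈ ball (0 : EuclideanSpace ℝ (Fin 2)) (R/2), φ x = 1 := by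
    intro x hx
    rw [mem_ball_zero_iff] at hx
    apply cutoff1_eq_one
    rw [hTnorm]
    rw [inv_mul_le_iff₀ hR]
    linarith
  have ht₁Ico : t₁ ∈ Set.Ico τ T := ⟨ht₁, lt_of_le_of_lt ht₁₂ ht₂⟩
  have ht₂Ico : t₂ ∈ Set.Ico τ T := ⟨ht₁.trans ht₁₂, ht₂⟩
  have hcontφ : Continuous φ := hφc.continuous
  -- the inner spatial bound
  have claim : ∀ t ∈ Set.Icc t₁ t₂,
      (∫ x in ball (0 : EuclideanSpace ℝ (Fin 2)) R,
        ‖fderiv ℝ (fderiv ℝ φ) x‖ * Snorm t x) ≤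
      (M + 1) * (ν.toReal + 1) * σ * R ^ (-(2/q)) := by
    intro t ht
    have htIco : t ∈ Set.Ico τ T := ⟨ht₁.trans ht.1, lt_of_le_of_lt ht.2 ht₂⟩
    set μb := volume.restrict (ball (0 : EuclideanSpace ℝ (Fin 2)) R) with hμb
    have hHess : ∀ x ∈ ball (0 : EuclideanSpace ℝ (Fin 2)) R,
        ‖fderiv ℝ (fderiv ℝ φ) x‖ ≤ M / R ^ 2 := by
      intro x hx
      exact hess_scaled_cutoff hR (mem_ball_zero_iff.1 hx).le hM
    set e1 : ℝ := 1 - 1/q with he1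
    have he1nn : 0 ≤ e1 := by
      rw [he1, sub_nonneg, div_le_one hq0]
      exact hq
    -- L^1 bound in ennreal
    have hb : ∫⁻ x, ENNReal.ofReal ‖‖fderiv ℝ (fderiv ℝ φ) x‖ * Snorm t x‖ ∂μb ≤
        ENNReal.ofReal (M / R^2) *
          (ENNReal.ofReal σ * (volume (ball (0 : EuclideanSpace ℝ (Fin 2)) R)) ^ e1) := by
      have hmono : ∫⁻ x, ENNReal.ofReal ‖‖fderiv ℝ (fderiv ℝ φ) x‖ * Snorm t x‖ ∂μb ≤
          ∫⁻ x, ENNReal.ofReal (M / R^2) * ENNReal.ofReal (Snorm t x) ∂μb := by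
        apply lintegral_mono_ae
        filter_upwards [ae_restrict_mem measurableSet_ball] with x hx
        rw [← ENNReal.ofReal_mul (div_nonneg hM0 (sq_nonneg R))]
        apply ENNReal.ofReal_le_ofReal
        rw [Real.norm_eq_abs, abs_of_nonneg (mul_nonneg (norm_nonneg (fderiv ℝ (fderiv ℝ φ) x)) (hS0 t x))]
        exact mul_le_mul_of_nonneg_right (hHess x hx) (hS0 t x)
      refine hmono.trans ?_
      rw [lintegral_const_mul' _ _ ENNReal.ofReal_ne_top]
      apply mul_le_mul_right
      have := holder_aux μb hq (Snorm t) (hS0 t) (hSLp t htIco)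
      rwa [Measure.restrict_apply_univ] at this
    -- pass to real integral
    have hstep : (∫ x in ball (0 : EuclideanSpace ℝ (Fin 2)) R,
        ‖fderiv ℝ (fderiv ℝ φ) x‖ * Snorm t x) ≤
        (ENNReal.ofReal (M / R^2) *
          (ENNReal.ofReal σ * (volume (ball (0 : EuclideanSpace ℝ (Fin 2)) R)) ^ e1)).toReal := by
      refine le_trans (Real.le_norm_self _) ?_
      refine le_trans (norm_integral_le_lintegral_norm _) ?_
      apply ENNReal.toReal_mono _ hb
      apply ENNReal.mul_ne_top ENNReal.ofReal_ne_top
      apply ENNReal.mul_ne_top ENNReal.ofReal_ne_top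
      exact (ENNReal.rpow_ne_top_of_nonneg he1nn measure_ball_lt_top.ne)
    refine hstep.trans ?_
    -- volume computation and ennreal -> real
    have hballvol : volume (ball (0 : EuclideanSpace ℝ (Fin 2)) R)
        = ENNReal.ofReal (R^2) * ν := by
      rw [hν, Measure.addHaar_ball _ _ hR.le, finrank_euclideanSpace_fin]
    have hpow : (volume (ball (0 : EuclideanSpace ℝ (Fin 2)) R)) ^ e1 ≤
        ENNReal.ofReal ((R^2) ^ e1) * (ν + 1) := by
      rw [hballvol, ENNReal.mul_rpow_of_nonneg _ _ he1nn,
        ENNReal.ofReal_rpow_of_pos (by positivity)]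
      apply mul_le_mul_right
      rcases le_total ν 1 with hν1 | hν1
      · exact le_trans (ENNReal.rpow_le_one hν1 he1nn) (self_le_add_left 1 ν)
      · refine le_trans ?_ (self_le_add_right ν 1)
        calc ν ^ e1 ≤ ν ^ (1:ℝ) := by
              apply ENNReal.rpow_le_rpow_of_exponent_le hν1
              rw [he1]
              have : 0 < 1/q := by positivity
              linarith
        _ = ν := ENNReal.rpow_one ν
    have hfinal : (ENNReal.ofReal (M / R^2) *
          (ENNReal.ofReal σ * (volume (ball (0 : EuclideanSpace ℝ (Fin 2)) R)) ^ e1)).toReal ≤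
        (M / R^2) * (σ * ((R^2) ^ e1 * (ν.toReal + 1))) := by
      have h1 : (ENNReal.ofReal (M / R^2) *
          (ENNReal.ofReal σ * (volume (ball (0 : EuclideanSpace ℝ (Fin 2)) R)) ^ e1)) ≤
          ENNReal.ofReal (M / R^2) *
          (ENNReal.ofReal σ * (ENNReal.ofReal ((R^2) ^ e1) * (ν + 1))) := by
        exact mul_le_mul_right (mul_le_mul_right hpow _) _
      refine le_trans (ENNReal.toReal_mono ?_ h1) ?_
      · apply ENNReal.mul_ne_top ENNReal.ofReal_ne_top
        apply ENNReal.mul_ne_top ENNReal.ofReal_ne_top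
        apply ENNReal.mul_ne_top ENNReal.ofReal_ne_top
        exact ENNReal.add_ne_top.2 ⟨hνtop, ENNReal.one_ne_top⟩
      · rw [ENNReal.toReal_mul, ENNReal.toReal_mul, ENNReal.toReal_mul,
          ENNReal.toReal_ofReal (div_nonneg hM0 (sq_nonneg R)),
          ENNReal.toReal_ofReal hσ, ENNReal.toReal_ofReal (by positivity),
          ENNReal.toReal_add hνtop ENNReal.one_ne_top, ENNReal.toReal_one]
    refine hfinal.trans ?_
    -- real arithmetic
    have hrw : ((R^2 : ℝ)) ^ e1 = R ^ (-(2/q)) * R^2 := by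
      have h1 : ((R^2 : ℝ)) ^ e1 = R ^ (2 * e1) := by
        rw [← Real.rpow_natCast R 2, ← Real.rpow_mul hR.le]
        norm_num
      have h2 : 2 * e1 = -(2/q) + 2 := by rw [he1]; ring
      rw [h1, h2, Real.rpow_add hR, Real.rpow_two]
    have hRpow : (0:ℝ) ≤ R ^ (-(2/q)) := Real.rpow_nonneg hR.le _
    have heq : (M / R^2) * (σ * ((R^2) ^ e1 * (ν.toReal + 1)))
        = M * σ * R ^ (-(2/q)) * (ν.toReal + 1) := by
      rw [hrw]
      have hR2 : (R:ℝ)^2 ≠ 0 := by positivity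
      field_simp
    rw [heq]
    nlinarith [mul_nonneg (mul_nonneg hσ hRpow) (by linarith : (0:ℝ) ≤ ν.toReal + 1)]
  -- time integral bound
  have hCb : (0:ℝ) ≤ (M + 1) * (ν.toReal + 1) * σ * R ^ (-(2/q)) := by
    have := Real.rpow_nonneg hR.le (-(2/q))
    positivity
  have step4 : (∫ t in t₁..t₂, ∫ x in ball (0 : EuclideanSpace ℝ (Fin 2)) R,
      ‖fderiv ℝ (fderiv ℝ φ) x‖ * Snorm t x) ≤
      (t₂ - t₁) * ((M + 1) * (ν.toReal + 1) * σ * R ^ (-(2/q))) := by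
    by_cases hInt : IntervalIntegrable (fun t => ∫ x in ball (0 : EuclideanSpace ℝ (Fin 2)) R,
        ‖fderiv ℝ (fderiv ℝ φ) x‖ * Snorm t x) volume t₁ t₂
    · calc (∫ t in t₁..t₂, ∫ x in ball (0 : EuclideanSpace ℝ (Fin 2)) R,
          ‖fderiv ℝ (fderiv ℝ φ) x‖ * Snorm t x)
          ≤ ∫ _t in t₁..t₂, (M + 1) * (ν.toReal + 1) * σ * R ^ (-(2/q)) :=
            intervalIntegral.integral_mono_on ht₁₂ hInt intervalIntegrable_const claim
      _ = (t₂ - t₁) * ((M + 1) * (ν.toReal + 1) * σ * R ^ (-(2/q))) := by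
            rw [intervalIntegral.integral_const, smul_eq_mul]
    · rw [intervalIntegral.integral_undef hInt]
      have h0 : (0:ℝ) ≤ t₂ - t₁ := by linarith
      positivity
  -- spatial comparisons
  have hμballint := heInt t₂ ht₂Ico
  have hint2 : IntegrableOn (fun x => e t₂ x * φ x)
      (ball (0 : EuclideanSpace ℝ (Fin 2)) R) volume := by
    have := (heInt t₂ ht₂Ico).bdd_mul hcontφ.aestronglyMeasurable
      (c := 1) (Eventually.of_forall fun x => by rw [Real.norm_eq_abs, abs_of_nonneg (hφ0 x)]; exact hφ1 x)
    apply this.congr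
    filter_upwards with x
    ring
  have step1 : (∫ x in ball (0 : EuclideanSpace ℝ (Fin 2)) (R/2), e t₂ x) ≤
      ∫ x in ball (0 : EuclideanSpace ℝ (Fin 2)) R, e t₂ x * φ x := by
    have h1 : (∫ x in ball (0 : EuclideanSpace ℝ (Fin 2)) (R/2), e t₂ x)
        = ∫ x in ball (0 : EuclideanSpace ℝ (Fin 2)) (R/2), e t₂ x * φ x := by
      apply setIntegral_congr_fun measurableSet_ball
      intro x hx
      show e t₂ x = e t₂ x * φ x
      rw [hφone x hx, mul_one]
    rw [h1]
    apply setIntegral_mono_set hint2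
    · filter_upwards with x
      exact mul_nonneg (he0 t₂ x) (hφ0 x)
    · exact HasSubset.Subset.eventuallyLE (ball_subset_ball (by linarith))
  have hint1 : IntegrableOn (fun x => e t₁ x * φ x)
      (ball (0 : EuclideanSpace ℝ (Fin 2)) R) volume := by
    have := (heInt t₁ ht₁Ico).bdd_mul hcontφ.aestronglyMeasurable
      (c := 1) (Eventually.of_forall fun x => by rw [Real.norm_eq_abs, abs_of_nonneg (hφ0 x)]; exact hφ1 x)
    apply this.congr
    filter_upwards with x
    ring
  have step3 : (∫ x in ball (0 : EuclideanSpace ℝ (Fin 2)) R, e t₁ x * φ x) ≤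
      ∫ x in ball (0 : EuclideanSpace ℝ (Fin 2)) R, e t₁ x := by
    apply integral_mono hint1 (heInt t₁ ht₁Ico)
    intro x
    exact mul_le_of_le_one_right (he0 t₁ x) (hφ1 x)
  have step2 := hweak φ hφc hφ0 hφsupp t₁ t₂ ht₁ ht₁₂ ht₂
  have := step4
  calc (∫ x in ball (0 : EuclideanSpace ℝ (Fin 2)) (R / 2), e t₂ x)
      ≤ ∫ x in ball (0 : EuclideanSpace ℝ (Fin 2)) R, e t₂ x * φ x := step1
  _ ≤ (∫ x in ball (0 : EuclideanSpace ℝ (Fin 2)) R, e t₁ x * φ x) +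
      ((t₂ - t₁) * ((M + 1) * (ν.toReal + 1) * σ * R ^ (-(2/q)))) := by
      have := le_trans step2 step4
      linarith
  _ ≤ (∫ x in ball (0 : EuclideanSpace ℝ (Fin 2)) R, e t₁ x) +
      (M + 1) * (ν.toReal + 1) * σ * (t₂ - t₁) * R ^ (-(2/q)) := by
      have h := step3
      have : (t₂ - t₁) * ((M + 1) * (ν.toReal + 1) * σ * R ^ (-(2/q)))
          = (M + 1) * (ν.toReal + 1) * σ * (t₂ - t₁) * R ^ (-(2/q)) := by ring
      linarith
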